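/- (Deterministic scaling bounds, Lemma 4.1/E.3) Let Φ*, Φ̂, Φ̃ ∈ ℝ^{m×d}, let V ∈ ℝ^{d×d} be positive definite, let ω ≥ 0, B ≥ 2, Γ > 0, α ∈ ℝ^m, and a_safe, b ∈ ℝ^d. Define M(a) := B ω ‖a‖_{V^{-1}} and 𝔞(ρ) := ρ b + (1−ρ) a_safe. Assume: (i) for every row i, ‖Φ̂ⁱ − Φ*ⁱ‖_V ≤ ω and ‖Φ̃ⁱ − Φ̂ⁱ‖_V ≤ (B−1)ω; (ii) Φ* a_safe ≤ α − Γ·1_m (componentwise); (iii) M(a_safe) ≤ Γ/3; (iv) Φ̃ b ≤ α. Then the set {ρ ∈ [0,1] : Φ̂ 𝔞(ρ) + ω‖𝔞(ρ)‖_{V^{-1}}·1_m ≤ α} is nonempty and contains its supremum ρ*, and: ρ* ≥ Γ/(Γ + 3M(b)), ρ* ≥ 2M(a_safe)/(2M(a_safe) + M(b)), and, writing a := 𝔞(ρ*), (1−ρ*)·M(a_safe) ≤ M(a), ρ*·M(b) ≤ 2M(a), and (1−ρ*)·Γ ≤ 6M(a). -/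

import Mathlib

open scoped Matrix

/-- Weighted norm `‖v‖_M = ‖M^{1/2} v‖ = √(vᵀ M v)` for a positive-semidefinite matrix `M`. -/
noncomputable def wnorm {d : ℕ} (M : Matrix (Fin d) (Fin d) ℝ) (v : Fin d → ℝ) : ℝ :=
  Real.sqrt (v ⬝ᵥ M.mulVec v)

namespace ScalingAux

open Matrix
open scoped MatrixOrder

variable {d : ℕ}

lemma wnorm_nonneg (A : Matrix (Fin d) (Fin d) ℝ) (v : Fin d → ℝ) : 0 ≤ wnorm A v :=
  Real.sqrt_nonneg _

lemma dot_le_sqrt (u v : Fin d → ℝ) :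
    u ⬝ᵥ v ≤ Real.sqrt (u ⬝ᵥ u) * Real.sqrt (v ⬝ᵥ v) := by
  simpa [dotProduct, sq] using Real.sum_mul_le_sqrt_mul_sqrt Finset.univ u v

lemma factor {A : Matrix (Fin d) (Fin d) ℝ} (hA : A.PosSemidef) (x y : Fin d → ℝ) :
    x ⬝ᵥ A *ᵥ y = (CFC.sqrt A *ᵥ x) ⬝ᵥ (CFC.sqrt A *ᵥ y) := by
  conv_lhs => rw [← CFC.sqrt_mul_sqrt_self A hA.nonneg, ← Matrix.mulVec_mulVec, dotProduct_mulVec,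
    ← Matrix.mulVec_transpose]
  congr 1
  rw [← Matrix.conjTranspose_eq_transpose_of_trivial, (CFC.sqrt_nonneg A).posSemidef.1]

lemma quad_nonneg {A : Matrix (Fin d) (Fin d) ℝ} (hA : A.PosSemidef) (x : Fin d → ℝ) :
    0 ≤ x ⬝ᵥ A *ᵥ x := by
  rw [factor hA]
  exact Finset.sum_nonneg fun j _ => mul_self_nonneg _

lemma sq_wnorm {A : Matrix (Fin d) (Fin d) ℝ} (hA : A.PosSemidef) (x : Fin d → ℝ) :
    x ⬝ᵥ A *ᵥ x = (wnorm A x) ^ 2 := by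
  rw [wnorm, Real.sq_sqrt (quad_nonneg hA x)]

lemma dot_mulVec_le {A : Matrix (Fin d) (Fin d) ℝ} (hA : A.PosSemidef) (x y : Fin d → ℝ) :
    x ⬝ᵥ A *ᵥ y ≤ wnorm A x * wnorm A y := by
  rw [factor hA x y, wnorm, wnorm, factor hA x x, factor hA y y]
  exact dot_le_sqrt _ _

lemma wnorm_add_le {A : Matrix (Fin d) (Fin d) ℝ} (hA : A.PosSemidef) (x y : Fin d → ℝ) :
    wnorm A (x + y) ≤ wnorm A x + wnorm A y := by
  have hxy : x ⬝ᵥ A *ᵥ y ≤ wnorm A x * wnorm A y := dot_mulVec_le hA x y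
  have hx : (0:ℝ) ≤ wnorm A x := wnorm_nonneg A x
  have hy : (0:ℝ) ≤ wnorm A y := wnorm_nonneg A y
  have hyx : y ⬝ᵥ A *ᵥ x = x ⬝ᵥ A *ᵥ y := by
    rw [factor hA, factor hA, dotProduct_comm]
  have expand : (x + y) ⬝ᵥ A *ᵥ (x + y)
      = x ⬝ᵥ A *ᵥ x + 2 * (x ⬝ᵥ A *ᵥ y) + y ⬝ᵥ A *ᵥ y := by
    rw [Matrix.mulVec_add, add_dotProduct, dotProduct_add, dotProduct_add,
      hyx]
    ring
  rw [wnorm, expand]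
  have hle : x ⬝ᵥ A *ᵥ x + 2 * (x ⬝ᵥ A *ᵥ y) + y ⬝ᵥ A *ᵥ y
      ≤ (wnorm A x + wnorm A y) ^ 2 := by
    rw [sq_wnorm hA x, sq_wnorm hA y]
    nlinarith [hxy]
  calc Real.sqrt (x ⬝ᵥ A *ᵥ x + 2 * (x ⬝ᵥ A *ᵥ y) + y ⬝ᵥ A *ᵥ y)
      ≤ Real.sqrt ((wnorm A x + wnorm A y) ^ 2) := Real.sqrt_le_sqrt hle
    _ = wnorm A x + wnorm A y := by
        rw [Real.sqrt_sq (by linarith : (0:ℝ) ≤ wnorm A x + wnorm A y)]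

lemma wnorm_smul (A : Matrix (Fin d) (Fin d) ℝ) (c : ℝ) (x : Fin d → ℝ) :
    wnorm A (c • x) = |c| * wnorm A x := by
  have h : (c • x) ⬝ᵥ A *ᵥ (c • x) = c ^ 2 * (x ⬝ᵥ A *ᵥ x) := by
    rw [Matrix.mulVec_smul, smul_dotProduct, dotProduct_smul, smul_eq_mul,
      smul_eq_mul]
    ring
  rw [wnorm, h, Real.sqrt_mul (sq_nonneg c), Real.sqrt_sq_eq_abs, wnorm]

lemma pairing {V : Matrix (Fin d) (Fin d) ℝ} (hV : V.PosDef) (u x : Fin d → ℝ) :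
    u ⬝ᵥ x ≤ wnorm V u * wnorm V⁻¹ x := by
  have hdet : IsUnit V.det := isUnit_iff_ne_zero.mpr (ne_of_gt hV.det_pos)
  have hx : V *ᵥ (V⁻¹ *ᵥ x) = x := by
    rw [Matrix.mulVec_mulVec, Matrix.mul_nonsing_inv _ hdet, Matrix.one_mulVec]
  set z := V⁻¹ *ᵥ x with hz
  have h1 : u ⬝ᵥ x ≤ wnorm V u * wnorm V z := by
    calc u ⬝ᵥ x = u ⬝ᵥ V *ᵥ z := by rw [hx]
      _ ≤ _ := dot_mulVec_le hV.posSemidef u z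
  have h2 : wnorm V z = wnorm V⁻¹ x := by
    rw [wnorm, wnorm]
    congr 1
    calc z ⬝ᵥ V *ᵥ z = z ⬝ᵥ x := by rw [hx]
      _ = x ⬝ᵥ V⁻¹ *ᵥ x := by rw [dotProduct_comm, hz]
  rw [h2] at h1
  exact h1

end ScalingAux

open ScalingAux
set_option maxHeartbeats 2000000

theorem scaling_bounds (d m : ℕ)
    (Φs Φh Φt : Fin m → Fin d → ℝ)
    (V : Matrix (Fin d) (Fin d) ℝ) (hV : V.PosDef)
    (ω B Γ : ℝ) (hω : 0 ≤ ω) (hB : 2 ≤ B) (hΓ : 0 < Γ)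
    (α : Fin m → ℝ) (asafe b : Fin d → ℝ)
    (M : (Fin d → ℝ) → ℝ) (hM : ∀ x, M x = B * ω * wnorm V⁻¹ x)
    (afrak : ℝ → Fin d → ℝ)
    (hafrak : ∀ ρ, afrak ρ = fun j => ρ * b j + (1 - ρ) * asafe j)
    (h1 : ∀ i, wnorm V (fun j => Φh i j - Φs i j) ≤ ω
        ∧ wnorm V (fun j => Φt i j - Φh i j) ≤ (B - 1) * ω)
    (h2 : ∀ i, Φs i ⬝ᵥ asafe ≤ α i - Γ)
    (h3 : M asafe ≤ Γ / 3)
    (h4 : ∀ i, Φt i ⬝ᵥ b ≤ α i)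
    (S : Set ℝ)
    (hS : S = {ρ | ρ ∈ Set.Icc (0 : ℝ) 1
        ∧ ∀ i, Φh i ⬝ᵥ afrak ρ + ω * wnorm V⁻¹ (afrak ρ) ≤ α i}) :
    S.Nonempty ∧ sSup S ∈ S
    ∧ Γ / (Γ + 3 * M b) ≤ sSup S
    ∧ 2 * M asafe / (2 * M asafe + M b) ≤ sSup S
    ∧ (1 - sSup S) * M asafe ≤ M (afrak (sSup S))
    ∧ sSup S * M b ≤ 2 * M (afrak (sSup S))
    ∧ (1 - sSup S) * Γ ≤ 6 * M (afrak (sSup S)) := by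
  classical
  have hVi : (V⁻¹).PosSemidef := hV.inv.posSemidef
  set ns := wnorm V⁻¹ asafe with hns
  set nb := wnorm V⁻¹ b with hnb
  have hns0 : 0 ≤ ns := wnorm_nonneg _ _
  have hnb0 : 0 ≤ nb := wnorm_nonneg _ _
  have hB0 : (0:ℝ) < B := by linarith
  have hMs : M asafe = B * ω * ns := hM _
  have hMb : M b = B * ω * nb := hM _
  have hMs0 : 0 ≤ M asafe := by rw [hMs]; positivity
  have hMb0 : 0 ≤ M b := by rw [hMb]; positivity
  have hafrak' : ∀ ρ : ℝ, afrak ρ = ρ • b + (1 - ρ) • asafe := by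
    intro ρ; funext j; simp [hafrak, smul_eq_mul]
  -- row bounds
  have hrow_b : ∀ i, Φh i ⬝ᵥ b ≤ α i + (B - 1) * ω * nb := by
    intro i
    have hu : (fun j => Φh i j - Φt i j) ⬝ᵥ b ≤ (B - 1) * ω * nb := by
      have hw : wnorm V (fun j => Φh i j - Φt i j)
          = wnorm V (fun j => Φt i j - Φh i j) := by
        have : (fun j => Φh i j - Φt i j) = (-1 : ℝ) • (fun j => Φt i j - Φh i j) := by
          funext j; simp only [Pi.smul_apply, smul_eq_mul]; ring
        rw [this, wnorm_smul]; simp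
      calc (fun j => Φh i j - Φt i j) ⬝ᵥ b
          ≤ wnorm V (fun j => Φh i j - Φt i j) * nb := pairing hV _ _
        _ ≤ (B - 1) * ω * nb := by
            rw [hw]
            exact mul_le_mul_of_nonneg_right (h1 i).2 hnb0
    have hsplit : (fun j => Φh i j - Φt i j) ⬝ᵥ b = Φh i ⬝ᵥ b - Φt i ⬝ᵥ b := by
      simp [dotProduct, sub_mul, Finset.sum_sub_distrib]
    have := h4 i
    linarith [hu, hsplit ▸ hu]
  have hrow_s : ∀ i, Φh i ⬝ᵥ asafe ≤ α i - Γ + ω * ns := by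
    intro i
    have hu : (fun j => Φh i j - Φs i j) ⬝ᵥ asafe ≤ ω * ns := by
      calc (fun j => Φh i j - Φs i j) ⬝ᵥ asafe
          ≤ wnorm V (fun j => Φh i j - Φs i j) * ns := pairing hV _ _
        _ ≤ ω * ns := mul_le_mul_of_nonneg_right (h1 i).1 hns0
    have hsplit : (fun j => Φh i j - Φs i j) ⬝ᵥ asafe = Φh i ⬝ᵥ asafe - Φs i ⬝ᵥ asafe := by
      simp [dotProduct, sub_mul, Finset.sum_sub_distrib]
    have := h2 i
    linarith [hsplit ▸ hu]
  -- dot product decomposition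
  have hdot : ∀ ρ : ℝ, ∀ i, Φh i ⬝ᵥ afrak ρ
      = ρ * (Φh i ⬝ᵥ b) + (1 - ρ) * (Φh i ⬝ᵥ asafe) := by
    intro ρ i
    rw [hafrak']
    simp [dotProduct_add, dotProduct_smul, smul_eq_mul]
  -- norm bound for the combination
  have hnorm_le : ∀ ρ : ℝ, 0 ≤ ρ → ρ ≤ 1 →
      wnorm V⁻¹ (afrak ρ) ≤ ρ * nb + (1 - ρ) * ns := by
    intro ρ h0 h1'
    rw [hafrak']
    calc wnorm V⁻¹ (ρ • b + (1 - ρ) • asafe)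
        ≤ wnorm V⁻¹ (ρ • b) + wnorm V⁻¹ ((1 - ρ) • asafe) := wnorm_add_le hVi _ _
      _ = ρ * nb + (1 - ρ) * ns := by
          rw [wnorm_smul, wnorm_smul, abs_of_nonneg h0, abs_of_nonneg (by linarith : (0:ℝ) ≤ 1 - ρ)]
  -- smallness
  have h3' : B * ω * ns ≤ Γ / 3 := by rw [← hMs]; exact h3
  -- feasibility criterion
  have hmem : ∀ ρ : ℝ, 0 ≤ ρ → ρ ≤ 1 → 3 * (ρ * (B * ω * nb)) ≤ 2 * ((1 - ρ) * Γ) → ρ ∈ S := by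
    intro ρ h0 h1' hcond
    rw [hS]
    refine ⟨⟨h0, h1'⟩, fun i => ?_⟩
    have hb := hrow_b i
    have hsafe := hrow_s i
    have hn := hnorm_le ρ h0 h1'
    rw [hdot ρ i]
    have e1 : ρ * (Φh i ⬝ᵥ b) ≤ ρ * (α i + (B - 1) * ω * nb) :=
      mul_le_mul_of_nonneg_left hb h0
    have e2 : (1 - ρ) * (Φh i ⬝ᵥ asafe) ≤ (1 - ρ) * (α i - Γ + ω * ns) :=
      mul_le_mul_of_nonneg_left hsafe (by linarith)
    have e3 : ω * wnorm V⁻¹ (afrak ρ) ≤ ω * (ρ * nb + (1 - ρ) * ns) :=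
      mul_le_mul_of_nonneg_left hn hω
    have e5 : (1 - ρ) * (ω * ns) ≤ (1 - ρ) * (Γ / 3 / 2) := by
      have : 2 * (ω * ns) ≤ Γ / 3 := by nlinarith [mul_nonneg hω hns0, mul_nonneg (mul_nonneg (by linarith : (0:ℝ) ≤ B - 2) hω) hns0]
      nlinarith [this]
    nlinarith [e1, e2, e3, e5, hcond, mul_nonneg (mul_nonneg h0 hω) hnb0]
  have h0S : (0:ℝ) ∈ S := hmem 0 le_rfl zero_le_one (by nlinarith)
  have hne : S.Nonempty := ⟨0, h0S⟩
  have hbdd : BddAbove S := ⟨1, fun x hx => by rw [hS] at hx; exact hx.1.2⟩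
  -- continuity
  have hcont : ∀ i, Continuous fun ρ : ℝ => Φh i ⬝ᵥ afrak ρ + ω * wnorm V⁻¹ (afrak ρ) := by
    intro i
    have haf : ∀ j, Continuous fun ρ : ℝ => afrak ρ j := by
      intro j
      simp only [hafrak]
      exact (continuous_id.mul continuous_const).add
        ((continuous_const.sub continuous_id).mul continuous_const)
    have hd : Continuous fun ρ : ℝ => Φh i ⬝ᵥ afrak ρ := by
      simp only [dotProduct]
      exact continuous_finset_sum _ fun j _ => continuous_const.mul (haf j)
    have hm : ∀ k, Continuous fun ρ : ℝ => (V⁻¹ *ᵥ afrak ρ) k := by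
      intro k
      simp only [Matrix.mulVec, dotProduct]
      exact continuous_finset_sum _ fun j _ => continuous_const.mul (haf j)
    have hw : Continuous fun ρ : ℝ => wnorm V⁻¹ (afrak ρ) := by
      simp only [wnorm, dotProduct]
      exact Real.continuous_sqrt.comp
        (continuous_finset_sum _ fun j _ => (haf j).mul (hm j))
    exact hd.add (continuous_const.mul hw)
  have hSclosed : IsClosed S := by
    rw [hS]
    have : {ρ : ℝ | ρ ∈ Set.Icc (0:ℝ) 1
        ∧ ∀ i, Φh i ⬝ᵥ afrak ρ + ω * wnorm V⁻¹ (afrak ρ) ≤ α i}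
        = Set.Icc (0:ℝ) 1 ∩ ⋂ i, {ρ : ℝ | Φh i ⬝ᵥ afrak ρ + ω * wnorm V⁻¹ (afrak ρ) ≤ α i} := by
      ext ρ; simp [Set.mem_iInter]
    rw [this]
    exact isClosed_Icc.inter (isClosed_iInter fun i => isClosed_le (hcont i) continuous_const)
  have hsup_mem : sSup S ∈ S := hSclosed.csSup_mem hne hbdd
  have hSmem : ∀ x ∈ S, x ∈ Set.Icc (0:ℝ) 1
      ∧ ∀ i, Φh i ⬝ᵥ afrak x + ω * wnorm V⁻¹ (afrak x) ≤ α i := by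
    intro x hx; rw [hS] at hx; exact hx
  obtain ⟨⟨hρ0, hρle1⟩, hρcons⟩ := hSmem _ hsup_mem
  -- lower bound 1
  have hden1 : (0:ℝ) < Γ + 3 * M b := by linarith
  have hlow1 : Γ / (Γ + 3 * M b) ≤ sSup S := by
    refine le_csSup hbdd (hmem (Γ / (Γ + 3 * M b)) (div_nonneg hΓ.le hden1.le) ?_ ?_)
    · rw [div_le_one hden1]; linarith
    · rw [← hMb]
      rw [div_mul_eq_mul_div, ← sub_nonneg]
      have key : 2 * ((1 - Γ / (Γ + 3 * M b)) * Γ) - 3 * (Γ * M b / (Γ + 3 * M b)) = 3 * (Γ * M b) / (Γ + 3 * M b) := by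
        field_simp
        ring
      rw [key]
      exact div_nonneg (by nlinarith [mul_nonneg hΓ.le hMb0]) hden1.le
  -- lower bound 2
  have hlow2 : 2 * M asafe / (2 * M asafe + M b) ≤ sSup S := by
    rcases eq_or_lt_of_le (by linarith : (0:ℝ) ≤ 2 * M asafe + M b) with hden | hden
    · rw [← hden, div_zero]
      exact le_csSup hbdd h0S
    · refine le_csSup hbdd
        (hmem (2 * M asafe / (2 * M asafe + M b))
          (div_nonneg (by linarith) hden.le) ?_ ?_)
      · rw [div_le_one hden]; linarith
      · rw [← hMb]
        rw [div_mul_eq_mul_div, ← sub_nonneg]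
        have key : 2 * ((1 - 2 * M asafe / (2 * M asafe + M b)) * Γ)
            - 3 * (2 * M asafe * M b / (2 * M asafe + M b))
            = (2 * Γ - 6 * M asafe) * M b / (2 * M asafe + M b) := by
          field_simp
          ring
        rw [key]
        have h6 : 0 ≤ 2 * Γ - 6 * M asafe := by linarith
        exact div_nonneg (mul_nonneg h6 hMb0) hden.le
  -- final three inequalities
  have hna0 : 0 ≤ wnorm V⁻¹ (afrak (sSup S)) := wnorm_nonneg _ _
  set na := wnorm V⁻¹ (afrak (sSup S)) with hna
  have hMa : M (afrak (sSup S)) = B * ω * na := hM _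
  have hMa0 : 0 ≤ M (afrak (sSup S)) := by rw [hMa]; positivity
  have hkey : (1 - sSup S) * M asafe ≤ M (afrak (sSup S))
      ∧ sSup S * M b ≤ 2 * M (afrak (sSup S))
      ∧ (1 - sSup S) * Γ ≤ 6 * M (afrak (sSup S)) := by
    rcases eq_or_lt_of_le hρle1 with hρ1 | hρlt
    · have hab : afrak (1:ℝ) = b := by
        funext j; rw [hafrak]; simp
      rw [hρ1, hab]
      refine ⟨by linarith, by linarith, by linarith⟩
    · -- tightness: some constraint is active at the sup
      have hex : ∃ i, α i ≤ Φh i ⬝ᵥ afrak (sSup S) + ω * na := by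
        by_contra hcon
        push_neg at hcon
        have hopen : IsOpen {t : ℝ | ∀ i, Φh i ⬝ᵥ afrak t + ω * wnorm V⁻¹ (afrak t) < α i} := by
          have : {t : ℝ | ∀ i, Φh i ⬝ᵥ afrak t + ω * wnorm V⁻¹ (afrak t) < α i}
              = ⋂ i, {t : ℝ | Φh i ⬝ᵥ afrak t + ω * wnorm V⁻¹ (afrak t) < α i} := by
            ext t; simp [Set.mem_iInter]
          rw [this]
          exact isOpen_iInter_of_finite fun i => isOpen_lt (hcont i) continuous_const
        obtain ⟨ε, hε, hball⟩ := Metric.isOpen_iff.mp hopen (sSup S) hcon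
        set ρ' := min 1 (sSup S + ε / 2) with hρ'
        have hρ'gt : sSup S < ρ' := lt_min hρlt (by linarith)
        have hρ'le1 : ρ' ≤ 1 := min_le_left _ _
        have hρ'0 : 0 ≤ ρ' := le_of_lt (lt_of_le_of_lt hρ0 hρ'gt)
        have hmemball : ρ' ∈ Metric.ball (sSup S) ε := by
          rw [Metric.mem_ball, Real.dist_eq, abs_lt]
          constructor
          · linarith [hρ'gt]
          · have : ρ' ≤ sSup S + ε / 2 := min_le_right _ _
            linarith
        have hρ'S : ρ' ∈ S := by
          rw [hS]
          exact ⟨⟨hρ'0, hρ'le1⟩, fun i => le_of_lt (hball hmemball i)⟩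
        have := le_csSup hbdd hρ'S
        linarith
      obtain ⟨i, hi⟩ := hex
      have hb := hrow_b i
      have hsafe := hrow_s i
      rw [hdot (sSup S) i] at hi
      have e1 : sSup S * (Φh i ⬝ᵥ b) ≤ sSup S * (α i + (B - 1) * ω * nb) :=
        mul_le_mul_of_nonneg_left hb hρ0
      have e2 : (1 - sSup S) * (Φh i ⬝ᵥ asafe) ≤ (1 - sSup S) * (α i - Γ + ω * ns) :=
        mul_le_mul_of_nonneg_left hsafe (by linarith)
      have hIneq : (1 - sSup S) * Γ
          ≤ sSup S * ((B - 1) * ω * nb) + (1 - sSup S) * (ω * ns) + ω * na := by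
        nlinarith [hi, e1, e2]
      -- reverse triangle: ρ·nb ≤ na + (1-ρ)·ns
      have htri : sSup S * nb ≤ na + (1 - sSup S) * ns := by
        have hsplit : (sSup S) • b = afrak (sSup S) + (sSup S - 1) • asafe := by
          funext j; rw [hafrak]; simp; ring
        have : wnorm V⁻¹ ((sSup S) • b)
            ≤ wnorm V⁻¹ (afrak (sSup S)) + wnorm V⁻¹ ((sSup S - 1) • asafe) := by
          rw [hsplit]; exact wnorm_add_le hVi _ _
        rw [wnorm_smul, wnorm_smul, abs_of_nonneg hρ0,
          abs_of_nonpos (by linarith : sSup S - 1 ≤ 0)] at this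
        rw [← hna, ← hnb, ← hns] at this
        linarith [this]
      have htri' : sSup S * (B * ω * nb) ≤ B * ω * na + (1 - sSup S) * (B * ω * ns) := by
        nlinarith [mul_le_mul_of_nonneg_left htri (by positivity : (0:ℝ) ≤ B * ω)]
      have h3'' : (1 - sSup S) * (B * ω * ns) ≤ (1 - sSup S) * (Γ / 3) :=
        mul_le_mul_of_nonneg_left h3' (by linarith)
      have hBna : (B - 2) * (ω * na) ≥ 0 :=
        mul_nonneg (by linarith) (mul_nonneg hω hna0)
      have hBns : (1 - sSup S) * ((B - 2) * (ω * ns)) ≥ 0 :=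
        mul_nonneg (by linarith) (mul_nonneg (by linarith) (mul_nonneg hω hns0))
      have hρnb : sSup S * (ω * nb) ≥ 0 :=
        mul_nonneg hρ0 (mul_nonneg hω hnb0)
      rw [hMs, hMb, hMa]
      refine ⟨?_, ?_, ?_⟩
      · nlinarith [hIneq, htri', h3'', hBna, hBns, hρnb]
      · nlinarith [hIneq, htri', h3'', hBna, hBns, hρnb]
      · nlinarith [hIneq, htri', h3'', hBna, hBns, hρnb]
  exact ⟨hne, hsup_mem, hlow1, hlow2, hkey.1, hkey.2.1, hkey.2.2⟩
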